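/- For every (x*, s) ∈ X* × ℝ the following are equivalent: (i) every x ∈ X satisfying A_u(x) − ω_u ∈ −S for all u ∈ 𝒰 also satisfies ⟨x*, x⟩ ≥ s; (ii) (x*, s) ∈ −oco[ {(λ∘A_u, λ(ω_u)) : (u,λ) ∈ 𝒰×S⁺} + ℝ₊(0_{X*},1) ], where oco denotes the closed convex hull in X* × ℝ (weak*-topology on X* times the usual topology on ℝ) and ℝ₊(0_{X*},1) := {(0,μ) : μ ≥ 0}. -/

import Mathlib

open Pointwise Seminorm

/-- Every continuous linear functional on the weak-* dual is an evaluation. -/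
lemma weakDual_dual_eval {X : Type*}
    [AddCommGroup X] [Module ℝ X] [TopologicalSpace X]
    (g : WeakDual ℝ X →L[ℝ] ℝ) :
    ∃ x : X, ∀ φ : WeakDual ℝ X, g φ = φ x := by
  have : Nonempty X := ⟨0⟩
  set B := topDualPairing ℝ X
  have hws := B.weakBilin_withSeminorms
  set q : Seminorm ℝ (WeakDual ℝ X) := (normSeminorm ℝ ℝ).comp g.toLinearMap
  have hqc : Continuous q := by
    have : (q : WeakDual ℝ X → ℝ) = fun φ => ‖g φ‖ := rfl
    rw [show Continuous q ↔ Continuous (q : WeakDual ℝ X → ℝ) from Iff.rfl, this]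
    exact g.continuous.norm
  obtain ⟨s, C, -, hC⟩ := Seminorm.bound_of_continuous hws q hqc
  set L : {x // x ∈ s} → WeakDual ℝ X →ₗ[ℝ] ℝ := fun i => B.flip i
  have hker : ⨅ i, LinearMap.ker (L i) ≤ LinearMap.ker g.toLinearMap := by
    intro φ hφ
    simp only [Submodule.mem_iInf, LinearMap.mem_ker] at hφ ⊢
    have hsup : (s.sup (B.toSeminormFamily)) φ = 0 := by
      apply le_antisymm _ (apply_nonneg _ _)
      apply Seminorm.finset_sup_apply_le le_rfl
      intro i hi
      have h2 : (B.flip i) φ = 0 := hφ ⟨i, hi⟩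
      change (φ : X →L[ℝ] ℝ) i = 0 at h2
      show ‖(φ : X →L[ℝ] ℝ) i‖ ≤ 0
      simp [h2]
    have h1 : q φ ≤ C • (s.sup B.toSeminormFamily) φ := hC φ
    rw [hsup, smul_zero] at h1
    have h3 : ‖g φ‖ = q φ := rfl
    exact norm_eq_zero.mp (le_antisymm (h3 ▸ h1) (norm_nonneg _))
  have hmem := mem_span_of_iInf_ker_le_ker hker
  obtain ⟨c, hc⟩ := (Submodule.mem_span_range_iff_exists_fun ℝ).1 hmem
  refine ⟨∑ i, c i • (i : X), fun φ => ?_⟩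
  have := LinearMap.congr_fun hc φ
  simp only [LinearMap.coe_sum, Finset.sum_apply, LinearMap.smul_apply] at this
  have hg : g φ = ∑ x : { x // x ∈ s }, c x • (L x) φ := this.symm
  rw [hg]
  simp only [L, map_sum, map_smul, smul_eq_mul]
  refine Finset.sum_congr rfl fun i _ => ?_
  rfl

/-- Bipolar-type lemma: a point on which every `S`-nonnegative continuous functional is
nonnegative belongs to the closed convex cone `S`. -/
lemma cone_mem_of_dual_nonneg {Z : Type*} [AddCommGroup Z] [Module ℝ Z] [TopologicalSpace Z]
    [IsTopologicalAddGroup Z] [ContinuousSMul ℝ Z] [LocallyConvexSpace ℝ Z]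
    {S : Set Z} (hS_closed : IsClosed S) (hS_conv : Convex ℝ S)
    (hS_cone : ∀ r : ℝ, 0 ≤ r → ∀ z ∈ S, r • z ∈ S) (hS0 : (0:Z) ∈ S)
    {z : Z} (hz : ∀ l : WeakDual ℝ Z, (∀ w ∈ S, 0 ≤ l w) → 0 ≤ l z) : z ∈ S := by
  by_contra hc
  obtain ⟨f, u, hfs, hfz⟩ := geometric_hahn_banach_closed_point hS_conv hS_closed hc
  have hu : 0 < u := by have := hfs 0 hS0; simpa using this
  have hfneg : ∀ w ∈ S, f w ≤ 0 := by
    intro w hw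
    by_contra hpos
    push_neg at hpos
    have hr : (0:ℝ) ≤ (u + 1) / f w := by positivity
    have h1 := hfs _ (hS_cone _ hr w hw)
    rw [map_smul, smul_eq_mul, div_mul_cancel₀ _ (ne_of_gt hpos)] at h1
    linarith
  have h0 : 0 ≤ (-f : WeakDual ℝ Z) z := by
    apply hz
    intro w hw
    have : ((-f : WeakDual ℝ Z) w : ℝ) = -(f w) := rfl
    change 0 ≤ -(f w)
    linarith [hfneg w hw]
  have : ((-f : WeakDual ℝ Z) z : ℝ) = -(f z) := rfl
  rw [this] at h0
  linarith

/-- The weak-* dual is locally convex (instance form). -/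
instance weakDual.locallyConvexSpace' {X : Type*} [AddCommGroup X] [Module ℝ X]
    [TopologicalSpace X] : LocallyConvexSpace ℝ (WeakDual ℝ X) :=
  WeakBilin.locallyConvexSpace

/-- Robust Farkas-type result for affine conical systems with uncertainty
(Corollary 2.1 / `lem_FL2`). -/
theorem stmt1
    {X Z : Type*}
    [AddCommGroup X] [Module ℝ X] [TopologicalSpace X] [IsTopologicalAddGroup X]
    [ContinuousSMul ℝ X] [LocallyConvexSpace ℝ X] [T2Space X]
    [AddCommGroup Z] [Module ℝ Z] [TopologicalSpace Z] [IsTopologicalAddGroup Z]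
    [ContinuousSMul ℝ Z] [LocallyConvexSpace ℝ Z] [T2Space Z]
    (S : Set Z) (hS_ne : S.Nonempty) (hS_closed : IsClosed S) (hS_conv : Convex ℝ S)
    (hS_cone : ∀ r : ℝ, 0 ≤ r → ∀ z ∈ S, r • z ∈ S)
    {ι : Type*} [Nonempty ι] (A : ι → X →L[ℝ] Z) (ω : ι → Z)
    (hF : {x : X | ∀ u : ι, A u x - ω u ∈ -S}.Nonempty)
    (xs : WeakDual ℝ X) (s : ℝ) :
    (∀ x : X, (∀ u : ι, A u x - ω u ∈ -S) → s ≤ xs x) ↔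
      (xs, s) ∈ -closure (convexHull ℝ
        ({q : WeakDual ℝ X × ℝ | ∃ u : ι, ∃ l : WeakDual ℝ Z,
            (∀ z ∈ S, 0 ≤ l z) ∧ (∀ x : X, q.1 x = l (A u x)) ∧ q.2 = l (ω u)} +
          {q : WeakDual ℝ X × ℝ | q.1 = 0 ∧ 0 ≤ q.2})) := by
  classical
  have hS0 : (0:Z) ∈ S := by
    obtain ⟨z, hz⟩ := hS_ne
    simpa using hS_cone 0 le_rfl z hz
  have hSadd : ∀ a ∈ S, ∀ b ∈ S, a + b ∈ S := by
    intro a ha b hb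
    have h2 := hS_conv ha hb (by norm_num : (0:ℝ) ≤ 1/2) (by norm_num : (0:ℝ) ≤ 1/2) (by norm_num)
    have := hS_cone 2 (by norm_num) _ h2
    rw [smul_add, smul_smul, smul_smul] at this
    norm_num at this
    exact this
  set K : Set (WeakDual ℝ X × ℝ) :=
    {q : WeakDual ℝ X × ℝ | ∃ u : ι, ∃ l : WeakDual ℝ Z,
        (∀ z ∈ S, 0 ≤ l z) ∧ (∀ x : X, q.1 x = l (A u x)) ∧ q.2 = l (ω u)} with hKdef
  set P : Set (WeakDual ℝ X × ℝ) := {q : WeakDual ℝ X × ℝ | q.1 = 0 ∧ 0 ≤ q.2} with hPdef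
  set M : Set (WeakDual ℝ X × ℝ) := K + P with hMdef
  constructor
  · -- hard direction
    intro h
    rw [Set.mem_neg]
    by_contra hc
    -- 0 ∈ M
    have h0M : (0 : WeakDual ℝ X × ℝ) ∈ M := by
      have hK0 : ((0 : WeakDual ℝ X), (0:ℝ)) ∈ K := by
        refine ⟨Classical.arbitrary ι, 0, fun _ _ => le_refl 0, fun _ => rfl, rfl⟩
      have hP0 : ((0 : WeakDual ℝ X), (0:ℝ)) ∈ P := ⟨rfl, le_refl 0⟩
      have := Set.add_mem_add hK0 hP0
      rw [hMdef, show (0 : WeakDual ℝ X × ℝ) = ((0 : WeakDual ℝ X), (0:ℝ)) + ((0 : WeakDual ℝ X), (0:ℝ)) by rw [Prod.mk_add_mk, add_zero, add_zero]; rfl]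
      exact this
    have hCconv : Convex ℝ (closure (convexHull ℝ M)) := (convex_convexHull ℝ M).closure
    obtain ⟨f, u, hfC, hfz⟩ := geometric_hahn_banach_closed_point hCconv isClosed_closure hc
    have h0C : (0 : WeakDual ℝ X × ℝ) ∈ closure (convexHull ℝ M) :=
      subset_closure (subset_convexHull ℝ M h0M)
    have hu : 0 < u := by have := hfC 0 h0C; simpa using this
    -- M is a cone
    have hMcone : ∀ r : ℝ, 0 ≤ r → ∀ q ∈ M, r • q ∈ M := by
      rintro r hr q hq
      rw [hMdef, Set.mem_add] at hq
      obtain ⟨a, ⟨u', l, hl, ha1, ha2⟩, b, ⟨hb1, hb2⟩, hab⟩ := hq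
      rw [hMdef, Set.mem_add]
      refine ⟨r • a, ⟨u', r • l, ?_, ?_, ?_⟩, r • b, ⟨?_, ?_⟩, ?_⟩
      · intro w hw
        have : ((r • l : WeakDual ℝ Z) w : ℝ) = r * l w := rfl
        rw [this]
        exact mul_nonneg hr (hl w hw)
      · intro x
        have h1 : ((r • a).1 : WeakDual ℝ X) x = r * (a.1 x) := rfl
        have h2 : ((r • l : WeakDual ℝ Z) (A u' x) : ℝ) = r * l (A u' x) := rfl
        rw [h1, h2, ha1 x]
      · have h2 : ((r • l : WeakDual ℝ Z) (ω u') : ℝ) = r * l (ω u') := rfl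
        rw [Prod.smul_snd, h2, ha2, smul_eq_mul]
      · rw [Prod.smul_fst, hb1, smul_zero]
      · rw [Prod.smul_snd, smul_eq_mul]
        exact mul_nonneg hr hb2
      · rw [← smul_add, hab]
    have hCcone : ∀ r : ℝ, 0 ≤ r → ∀ q ∈ closure (convexHull ℝ M),
        r • q ∈ closure (convexHull ℝ M) := by
      intro r hr q hq
      have h1 : r • q ∈ (fun w => r • w) '' closure (convexHull ℝ M) :=
        ⟨q, hq, rfl⟩
      have h2 := (image_closure_subset_closure_image
        (continuous_const_smul r : Continuous fun w : WeakDual ℝ X × ℝ => r • w)) h1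
      have h3 : (fun w => r • w) '' convexHull ℝ M = r • convexHull ℝ M := rfl
      rw [h3, ← convexHull_smul] at h2
      refine closure_mono (convexHull_mono ?_) h2
      rintro w ⟨w', hw', rfl⟩
      exact hMcone r hr w' hw'
    -- f ≤ 0 on the closed hull
    have hfC0 : ∀ q ∈ closure (convexHull ℝ M), f q ≤ 0 := by
      intro q hq
      by_contra hpos
      push_neg at hpos
      have hr : (0:ℝ) ≤ (u + 1) / f q := by positivity
      have h1 := hfC _ (hCcone _ hr q hq)
      rw [map_smul, smul_eq_mul, div_mul_cancel₀ _ (ne_of_gt hpos)] at h1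
      linarith
    -- decompose f
    obtain ⟨x₀, hx₀⟩ := weakDual_dual_eval
      (f.comp (ContinuousLinearMap.inl ℝ (WeakDual ℝ X) ℝ))
    set c : ℝ := f ((0 : WeakDual ℝ X), (1:ℝ)) with hcdef
    have hfdec : ∀ (p : WeakDual ℝ X) (t : ℝ), f (p, t) = p x₀ + t * c := by
      intro p t
      have hsplit : ((p, t) : WeakDual ℝ X × ℝ) = (p, 0) + (0, t) := by
        simp
      rw [hsplit, map_add]
      have h1 : f (p, (0:ℝ)) = p x₀ := hx₀ p
      have h2 : f ((0 : WeakDual ℝ X), t) = t * c := by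
        have : ((0 : WeakDual ℝ X), t) = t • ((0 : WeakDual ℝ X), (1:ℝ)) := by simp
        rw [this, map_smul, smul_eq_mul]
      rw [h1, h2]
    -- key inequality on generators
    have hKle : ∀ (u' : ι) (l : WeakDual ℝ Z), (∀ w ∈ S, 0 ≤ l w) →
        ∀ μ : ℝ, 0 ≤ μ → l (A u' x₀) + (l (ω u') + μ) * c ≤ 0 := by
      intro u' l hl μ hμ
      set p : WeakDual ℝ X := ContinuousLinearMap.comp (show Z →L[ℝ] ℝ from l) (A u') with hpdef
      have hpK : ((p, l (ω u')) : WeakDual ℝ X × ℝ) ∈ K :=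
        ⟨u', l, hl, fun x => rfl, rfl⟩
      have hqP : (((0 : WeakDual ℝ X), μ) : WeakDual ℝ X × ℝ) ∈ P := ⟨rfl, hμ⟩
      have hqM := Set.add_mem_add hpK hqP
      have hq : ((p, l (ω u') + μ) : WeakDual ℝ X × ℝ) ∈ M := by
        have : ((p, l (ω u')) : WeakDual ℝ X × ℝ) + (0, μ) = (p, l (ω u') + μ) := by
          simp
        rwa [this] at hqM
      have := hfC0 _ (subset_closure (subset_convexHull ℝ M hq))
      rw [hfdec] at this
      have hpx : (p x₀ : ℝ) = l (A u' x₀) := rfl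
      rw [hpx] at this
      linarith
    -- c ≤ 0
    have hcle : c ≤ 0 := by
      have hthis := hKle (Classical.arbitrary ι) 0 (fun _ _ => le_refl 0) 1 zero_le_one
      have e1 : ((0 : WeakDual ℝ Z) (A (Classical.arbitrary ι) x₀) : ℝ) = 0 := rfl
      have e2 : ((0 : WeakDual ℝ Z) (ω (Classical.arbitrary ι)) : ℝ) = 0 := rfl
      rw [e1, e2] at hthis
      linarith
    -- value at the separated point
    have hz' : u < -(xs x₀) - s * c := by
      have hneg : (-((xs, s) : WeakDual ℝ X × ℝ)) = (-xs, -s) := rfl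
      rw [hneg, hfdec] at hfz
      have : ((-xs : WeakDual ℝ X) x₀ : ℝ) = -(xs x₀) := rfl
      rw [this] at hfz
      linarith
    rcases hcle.lt_or_eq with hlt | heq
    · -- c < 0
      set xb : X := (-c)⁻¹ • x₀ with hxbdef
      have hcne : (-c) ≠ 0 := by linarith
      have hxeq : x₀ = (-c) • xb := by
        rw [hxbdef, smul_smul, mul_inv_cancel₀ hcne, one_smul]
      have hxbF : ∀ u' : ι, A u' xb - ω u' ∈ -S := by
        intro u'
        rw [Set.mem_neg, neg_sub]
        apply cone_mem_of_dual_nonneg hS_closed hS_conv hS_cone hS0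
        intro l hl
        have hle := hKle u' l hl 0 le_rfl
        have hA : l (A u' x₀) = (-c) * l (A u' xb) := by
          rw [hxeq, map_smul, map_smul, smul_eq_mul]
        rw [map_sub]
        rw [hA] at hle
        nlinarith [hl _ hS0]
      have hsxb := h xb hxbF
      have hx0 : xs x₀ = (-c) * xs xb := by rw [hxeq, map_smul, smul_eq_mul]
      rw [hx0] at hz'
      nlinarith
    · -- c = 0
      obtain ⟨xh, hxh⟩ := hF
      have hAx0 : ∀ u' : ι, A u' x₀ ∈ -S := by
        intro u'
        rw [Set.mem_neg]
        apply cone_mem_of_dual_nonneg hS_closed hS_conv hS_cone hS0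
        intro l hl
        have hle := hKle u' l hl 0 le_rfl
        rw [heq] at hle
        rw [map_neg]
        nlinarith
      have hxs0 : xs x₀ < 0 := by
        rw [heq] at hz'
        nlinarith
      have hfeas : ∀ t : ℝ, 0 ≤ t → ∀ u' : ι, A u' (xh + t • x₀) - ω u' ∈ -S := by
        intro t ht u'
        have hsplit : A u' (xh + t • x₀) - ω u' = (A u' xh - ω u') + t • (A u' x₀) := by
          rw [map_add, map_smul]
          abel
        rw [hsplit, Set.mem_neg, neg_add]
        apply hSadd
        · rw [← Set.mem_neg]
          exact hxh u'
        · rw [← smul_neg]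
          apply hS_cone t ht
          rw [← Set.mem_neg]
          exact hAx0 u'
      have hsxh := h xh hxh
      set t : ℝ := (xs xh - s + 1) / (-(xs x₀)) with htdef
      have ht : 0 ≤ t := by
        apply div_nonneg
        · linarith
        · linarith
      have := h _ (hfeas t ht)
      rw [map_add, map_smul, smul_eq_mul] at this
      have hne : -(xs x₀) ≠ 0 := by linarith
      have htx : t * xs x₀ = -(xs xh - s + 1) := by
        rw [htdef]
        rw [div_mul_eq_mul_div, div_neg, mul_div_assoc, div_self (by linarith : xs x₀ ≠ 0)]
        ring
      rw [htx] at this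
      linarith
  · -- easy direction
    intro hmem x hx
    rw [Set.mem_neg] at hmem
    set D : Set (WeakDual ℝ X × ℝ) := {q : WeakDual ℝ X × ℝ | q.1 x ≤ q.2} with hDdef
    have hDclosed : IsClosed D := by
      have hcont : Continuous fun q : WeakDual ℝ X × ℝ => q.2 - q.1 x :=
        continuous_snd.sub ((WeakDual.eval_continuous x).comp continuous_fst)
      have : D = (fun q : WeakDual ℝ X × ℝ => q.2 - q.1 x) ⁻¹' Set.Ici 0 := by
        ext q
        simp [hDdef, sub_nonneg]
      rw [this]
      exact isClosed_Ici.preimage hcont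
    have hDconv : Convex ℝ D := by
      intro a ha b hb α β hα hβ hab
      have h1 : ((α • a + β • b).1 : WeakDual ℝ X) x = α * a.1 x + β * b.1 x := rfl
      have h2 : ((α • a + β • b).2 : ℝ) = α * a.2 + β * b.2 := rfl
      show ((α • a + β • b).1 : WeakDual ℝ X) x ≤ (α • a + β • b).2
      rw [h1, h2]
      have := add_le_add (mul_le_mul_of_nonneg_left ha hα) (mul_le_mul_of_nonneg_left hb hβ)
      exact this
    have hMD : M ⊆ D := by
      rintro q hq
      rw [hMdef, Set.mem_add] at hq
      obtain ⟨a, ⟨u', l, hl, ha1, ha2⟩, b, ⟨hb1, hb2⟩, hab⟩ := hq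
      show (q.1 : WeakDual ℝ X) x ≤ q.2
      have hq1 : q.1 = a.1 + b.1 := by rw [← hab]; rfl
      have hq2 : q.2 = a.2 + b.2 := by rw [← hab]; rfl
      have happ : ((a.1 + b.1 : WeakDual ℝ X)) x = a.1 x + b.1 x := rfl
      have hb1x : (b.1 : WeakDual ℝ X) x = 0 := by rw [hb1]; rfl
      have hlAx : l (A u' x) ≤ l (ω u') := by
        have hmem' : ω u' - A u' x ∈ S := by
          have := hx u'
          rw [Set.mem_neg] at this
          rwa [neg_sub] at this
        have := hl _ hmem'
        rw [map_sub] at this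
        linarith
      rw [hq1, hq2, happ, hb1x, ha1 x, ha2]
      linarith
    have hCD : closure (convexHull ℝ M) ⊆ D :=
      closure_minimal (convexHull_min hMD hDconv) hDclosed
    have := hCD hmem
    have hnegmem : ((-xs : WeakDual ℝ X) x : ℝ) = -(xs x) := rfl
    have hD' : ((-((xs, s) : WeakDual ℝ X × ℝ)).1 : WeakDual ℝ X) x ≤ (-((xs,s) : WeakDual ℝ X × ℝ)).2 := this
    have hfst : (-((xs, s) : WeakDual ℝ X × ℝ)).1 = -xs := rfl
    have hsnd : (-((xs, s) : WeakDual ℝ X × ℝ)).2 = -s := rfl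
    rw [hfst, hsnd, hnegmem] at hD'
    linarith
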